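/- Let y = μ + Z ∈ ℝ^m where Z ~ P₀ has a symmetric distribution with mean zero, and let q^β denote the 1−β quantile of max_{i∈[m]} |Z_i|. Let γ̂ = argmax_{γ∈[m]} y_γ and define the plausible set Ĝ⁺_ν = {γ ∈ [m] : y_γ ≥ y_{γ̂} − 4 q^ν}. Then for any 0 < ν < α < 1, with q^{(α−ν)}(Ĝ⁺_ν) the 1−(α−ν) quantile of max_{i∈Ĝ⁺_ν} |Z_i| (taken over the data-dependent set), it holds that P{μ_{γ̂} ∈ (y_{γ̂} − q^{(α−ν)}(Ĝ⁺_ν), y_{γ̂} + q^{(α−ν)}(Ĝ⁺_ν))} ≥ 1 − α. -/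

import Mathlib

open MeasureTheory Set

namespace WinnerAux

variable {m : ℕ}

/-- The event that all coordinates in `I` are bounded by `t` in absolute value. -/
def E (I : Set (Fin m)) (t : ℝ) : Set (Fin m → ℝ) := {z | ∀ i ∈ I, |z i| ≤ t}

lemma measE (I : Set (Fin m)) (t : ℝ) : MeasurableSet (E I t) := by
  have h : E I t = ⋂ i ∈ I, {z : Fin m → ℝ | |z i| ≤ t} := by
    ext z; simp [E]
  rw [h]
  exact MeasurableSet.biInter (Set.to_countable I) fun i _ =>
    measurableSet_le (measurable_pi_apply i).abs measurable_const

lemma E_mono_t (I : Set (Fin m)) {s t : ℝ} (h : s ≤ t) : E I s ⊆ E I t :=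
  fun _ hz i hi => (hz i hi).trans h

lemma E_anti_I {I J : Set (Fin m)} (h : I ⊆ J) (t : ℝ) : E J t ⊆ E I t :=
  fun _ hz i hi => hz i (h hi)

variable (P0 : Measure (Fin m → ℝ)) [IsProbabilityMeasure P0]

lemma S_nonempty (I : Set (Fin m)) {β : ℝ} (hβ : 0 < β) :
    {t : ℝ | ENNReal.ofReal (1 - β) ≤ P0 (E I t)}.Nonempty := by
  have hmono : Monotone (fun n : ℕ => E (m := m) I n) := fun a b hab =>
    E_mono_t I (by exact_mod_cast hab)
  have hU : (⋃ n : ℕ, E (m := m) I n) = univ := by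
    ext z
    simp only [mem_iUnion, mem_univ, iff_true]
    refine ⟨⌈∑ i : Fin m, |z i|⌉₊, fun i _ => ?_⟩
    calc |z i| ≤ ∑ j : Fin m, |z j| :=
          Finset.single_le_sum (fun j _ => abs_nonneg (z j)) (Finset.mem_univ i)
      _ ≤ ⌈∑ j : Fin m, |z j|⌉₊ := Nat.le_ceil _
  have hsup : (⨆ n : ℕ, P0 (E I n)) = 1 := by
    rw [← hmono.directed_le.measure_iUnion, hU, measure_univ]
  have hlt : ENNReal.ofReal (1 - β) < ⨆ n : ℕ, P0 (E I n) := by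
    rw [hsup]; exact ENNReal.ofReal_lt_one.mpr (by linarith)
  obtain ⟨n, hn⟩ := lt_iSup_iff.mp hlt
  exact ⟨(n : ℝ), hn.le⟩

lemma S_lb (I : Set (Fin m)) (hI : I.Nonempty) {β : ℝ} (hβ : β < 1) {t : ℝ}
    (ht : t ∈ {t : ℝ | ENNReal.ofReal (1 - β) ≤ P0 (E I t)}) : 0 ≤ t := by
  by_contra hneg
  push_neg at hneg
  have hE : E (m := m) I t = ∅ := by
    ext z
    simp only [E, mem_setOf_eq, mem_empty_iff_false, iff_false, not_forall]
    obtain ⟨i, hi⟩ := hI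
    exact ⟨i, hi, by nlinarith [abs_nonneg (z i)]⟩
  simp only [mem_setOf_eq, hE, measure_empty, nonpos_iff_eq_zero] at ht
  rw [ENNReal.ofReal_eq_zero] at ht
  linarith

lemma S_bddBelow (I : Set (Fin m)) (hI : I.Nonempty) {β : ℝ} (hβ : β < 1) :
    BddBelow {t : ℝ | ENNReal.ofReal (1 - β) ≤ P0 (E I t)} :=
  ⟨0, fun _ ht => S_lb P0 I hI hβ ht⟩

lemma q_nonneg (I : Set (Fin m)) (hI : I.Nonempty) {β : ℝ} (hβ0 : 0 < β) (hβ1 : β < 1) :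
    0 ≤ sInf {t : ℝ | ENNReal.ofReal (1 - β) ≤ P0 (E I t)} :=
  le_csInf (S_nonempty P0 I hβ0) fun _ ht => S_lb P0 I hI hβ1 ht

lemma S_upper (I : Set (Fin m)) {β : ℝ} {t u : ℝ}
    (ht : t ∈ {t : ℝ | ENNReal.ofReal (1 - β) ≤ P0 (E I t)}) (htu : t ≤ u) :
    u ∈ {t : ℝ | ENNReal.ofReal (1 - β) ≤ P0 (E I t)} :=
  le_trans ht (measure_mono (E_mono_t I htu))

/-- The quantile achieves the desired coverage. -/
lemma coverage (I : Set (Fin m)) (hI : I.Nonempty) {β : ℝ} (hβ0 : 0 < β) (hβ1 : β < 1) :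
    ENNReal.ofReal (1 - β) ≤
      P0 (E I (sInf {t : ℝ | ENNReal.ofReal (1 - β) ≤ P0 (E I t)})) := by
  set S := {t : ℝ | ENNReal.ofReal (1 - β) ≤ P0 (E I t)} with hSdef
  have hSne : S.Nonempty := S_nonempty P0 I hβ0
  set u : ℕ → ℝ := fun n => sInf S + 1 / (n + 1) with hu
  have huS : ∀ n, u n ∈ S := by
    intro n
    obtain ⟨t, htS, hlt⟩ := Real.lt_sInf_add_pos hSne
      (by positivity : (0:ℝ) < 1 / ((n:ℝ) + 1))
    exact S_upper P0 I htS hlt.le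
  have huanti : Antitone u := by
    intro a b hab
    have : (1:ℝ) / (b + 1) ≤ 1 / (a + 1) := by
      apply one_div_le_one_div_of_le (by positivity)
      exact_mod_cast by omega
    simp only [hu]; linarith
  have hEanti : Antitone fun n => E (m := m) I (u n) := fun a b hab =>
    E_mono_t I (huanti hab)
  have hsub : (⋂ n, E (m := m) I (u n)) ⊆ E I (sInf S) := by
    intro z hz i hi
    refine le_of_forall_pos_le_add fun ε hε => ?_
    obtain ⟨n, hn⟩ := exists_nat_one_div_lt hε
    have := (mem_iInter.mp hz n) i hi
    simp only [hu] at this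
    linarith
  have htend : Filter.Tendsto (fun n => P0 (E I (u n))) Filter.atTop
      (nhds (P0 (⋂ n, E I (u n)))) :=
    tendsto_measure_iInter_atTop (fun n => (measE I (u n)).nullMeasurableSet) hEanti
      ⟨0, measure_ne_top _ _⟩
  have hlim : ENNReal.ofReal (1 - β) ≤ P0 (⋂ n, E I (u n)) :=
    ge_of_tendsto htend (Filter.Eventually.of_forall fun n => huS n)
  exact hlim.trans (measure_mono hsub)

lemma q_mono {I J : Set (Fin m)} (h : I ⊆ J) (hI : I.Nonempty) {β : ℝ}
    (hβ0 : 0 < β) (hβ1 : β < 1) :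
    sInf {t : ℝ | ENNReal.ofReal (1 - β) ≤ P0 (E I t)} ≤
      sInf {t : ℝ | ENNReal.ofReal (1 - β) ≤ P0 (E J t)} :=
  csInf_le_csInf (S_bddBelow P0 I hI hβ1) (S_nonempty P0 J hβ0)
    (fun t ht => le_trans ht (measure_mono (E_anti_I h t)))

end WinnerAux

/-- Locally simultaneous inference on the winner, parametric location family. -/
theorem winner_locally_simultaneous
    {m : ℕ} (hm : 0 < m)
    (P0 : Measure (Fin m → ℝ)) [IsProbabilityMeasure P0]
    (hmean : ∀ i, ∫ z, z i ∂P0 = 0)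
    (hsym : P0.map (fun z i => -(z i)) = P0)
    (q : ℝ → Set (Fin m) → ℝ)
    (hq : ∀ β I, q β I =
      sInf {t : ℝ | ENNReal.ofReal (1 - β) ≤ P0 {z | ∀ i ∈ I, |z i| ≤ t}})
    (ghat : (Fin m → ℝ) → Fin m)
    (hghat : ∀ (y : Fin m → ℝ) (i : Fin m), y i ≤ y (ghat y))
    (μ : Fin m → ℝ) (α ν : ℝ) (hν : 0 < ν) (hνα : ν < α) (hα : α < 1) :
    ENNReal.ofReal (1 - α) ≤
      P0 {z | |(μ + z) (ghat (μ + z)) - μ (ghat (μ + z))| ≤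
        q (α - ν) {γ | (μ + z) (ghat (μ + z)) - 4 * q ν Set.univ ≤ (μ + z) γ}} := by
  classical
  open WinnerAux in
  -- maximizer of μ
  obtain ⟨γs, -, hγs⟩ := Finset.exists_max_image Finset.univ μ
    ⟨⟨0, hm⟩, Finset.mem_univ _⟩
  have hγs' : ∀ γ, μ γ ≤ μ γs := fun γ => hγs γ (Finset.mem_univ γ)
  have hν1 : ν < 1 := lt_trans hνα hα
  have hαν0 : 0 < α - ν := by linarith
  have hαν1 : α - ν < 1 := by linarith
  have huniv : (Set.univ : Set (Fin m)).Nonempty := ⟨⟨0, hm⟩, mem_univ _⟩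
  set c1 := q ν Set.univ with hc1def
  set G : Set (Fin m) := {γ | μ γs - 2 * c1 ≤ μ γ} with hGdef
  set c2 := q (α - ν) G with hc2def
  -- the quantile sets in hq are exactly `E I t`
  have hqE : ∀ β I, q β I = sInf {t : ℝ | ENNReal.ofReal (1 - β) ≤ P0 (E I t)} :=
    fun β I => hq β I
  have hc1nonneg : 0 ≤ c1 := by
    rw [hc1def, hqE]; exact q_nonneg P0 Set.univ huniv hν hν1
  have hGne : G.Nonempty := ⟨γs, by simp [hGdef]; linarith⟩
  -- coverage events
  have hA : ENNReal.ofReal (1 - ν) ≤ P0 (E Set.univ c1) := by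
    rw [hc1def, hqE]; exact coverage P0 Set.univ huniv hν hν1
  have hB : ENNReal.ofReal (1 - (α - ν)) ≤ P0 (E G c2) := by
    rw [hc2def, hqE]; exact coverage P0 G hGne hαν0 hαν1
  -- the intersection is contained in the target event
  have hsub : E Set.univ c1 ∩ E G c2 ⊆
      {z | |(μ + z) (ghat (μ + z)) - μ (ghat (μ + z))| ≤
        q (α - ν) {γ | (μ + z) (ghat (μ + z)) - 4 * q ν Set.univ ≤ (μ + z) γ}} := by
    rintro z ⟨hzA, hzB⟩
    set y := μ + z with hydef
    set γh := ghat y with hγh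
    have hyγ : ∀ γ, y γ = μ γ + z γ := fun γ => rfl
    have hzA' : ∀ i, |z i| ≤ c1 := fun i => hzA i (mem_univ i)
    -- γh ∈ G
    have hγhG : γh ∈ G := by
      have h1 : y γs ≤ y γh := hghat y γs
      have h2 := abs_le.mp (hzA' γs)
      have h3 := abs_le.mp (hzA' γh)
      simp only [hGdef, mem_setOf_eq]
      rw [hyγ, hyγ] at h1
      linarith [h2.1, h2.2, h3.1, h3.2]
    -- G ⊆ plausible set
    have hGsub : G ⊆ {γ | y γh - 4 * c1 ≤ y γ} := by
      intro γ hγ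
      simp only [hGdef, mem_setOf_eq] at hγ ⊢
      have h3 := abs_le.mp (hzA' γh)
      have h4 := abs_le.mp (hzA' γ)
      rw [hyγ, hyγ]
      have := hγs' γh
      linarith [h3.1, h3.2, h4.1, h4.2]
    have hzγh : |z γh| ≤ c2 := hzB γh hγhG
    have hmono : c2 ≤ q (α - ν) {γ | y γh - 4 * c1 ≤ y γ} := by
      rw [hc2def, hqE, hqE]
      exact q_mono P0 hGsub hGne hαν0 hαν1
    simp only [mem_setOf_eq]
    have hy : (μ + z) (ghat (μ + z)) - μ (ghat (μ + z)) = z γh := by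
      simp [hγh, hydef, Pi.add_apply]
    rw [hy]
    exact hzγh.trans hmono
  -- probability bound via inclusion-exclusion
  have hkey : ENNReal.ofReal (1 - α) ≤ P0 (E Set.univ c1 ∩ E G c2) := by
    have hunion : P0 (E Set.univ c1 ∪ E G c2) + P0 (E Set.univ c1 ∩ E G c2)
        = P0 (E Set.univ c1) + P0 (E G c2) :=
      measure_union_add_inter _ (measE G c2)
    have hsum : ENNReal.ofReal (1 - ν) + ENNReal.ofReal (1 - (α - ν)) ≤
        1 + P0 (E Set.univ c1 ∩ E G c2) := by
      calc ENNReal.ofReal (1 - ν) + ENNReal.ofReal (1 - (α - ν))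
          ≤ P0 (E Set.univ c1) + P0 (E G c2) := add_le_add hA hB
        _ = P0 (E Set.univ c1 ∪ E G c2) + P0 (E Set.univ c1 ∩ E G c2) := hunion.symm
        _ ≤ 1 + P0 (E Set.univ c1 ∩ E G c2) := add_le_add prob_le_one le_rfl
    have hofr : ENNReal.ofReal (1 - ν) + ENNReal.ofReal (1 - (α - ν)) =
        1 + ENNReal.ofReal (1 - α) := by
      rw [← ENNReal.ofReal_add (by linarith) (by linarith), ← ENNReal.ofReal_one,
        ← ENNReal.ofReal_add (by norm_num) (by linarith)]
      ring_nf
    rw [hofr] at hsum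
    exact (ENNReal.add_le_add_iff_left ENNReal.one_ne_top).mp hsum
  exact hkey.trans (measure_mono hsub)
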